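/- For each fixed m ≥ 1, the sequence of Busemann increments B_n(0,m) := T(−n, 0) − T(−n, m) is nondecreasing in n, where −n denotes the site (−n,0), 0 = (0,0) and m = (m,0). -/

import Mathlib

/-- Nearest-neighbour adjacency on `ℤ × ℤ`. -/
def HAdj (p q : ℤ × ℤ) : Prop := (p.1 - q.1).natAbs + (p.2 - q.2).natAbs = 1

/-- A list of sites lies in the upper half-plane `ℤ × ℤ₊`. -/
def InHalf (Γ : List (ℤ × ℤ)) : Prop := ∀ p ∈ Γ, 0 ≤ p.2

/-- Cost of a path: sum of edge weights along consecutive pairs. -/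
def cost (τ : (ℤ × ℤ) → (ℤ × ℤ) → ℝ) : List (ℤ × ℤ) → ℝ
  | [] => 0
  | [_] => 0
  | a :: b :: rest => τ a b + cost τ (b :: rest)

/-- Half-plane first-passage time between `x` and `y`: infimum of costs of
nearest-neighbour paths from `x` to `y` staying in the upper half-plane. -/
noncomputable def T (τ : (ℤ × ℤ) → (ℤ × ℤ) → ℝ) (x y : ℤ × ℤ) : ℝ :=
  sInf {c | ∃ Γ : List (ℤ × ℤ), Γ.head? = some x ∧ Γ.getLast? = some y ∧
    Γ.Chain' HAdj ∧ InHalf Γ ∧ cost τ Γ = c}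

/-! ### Auxiliary material -/

lemma HAdj_cases {p q : ℤ × ℤ} (h : HAdj p q) :
    q = (p.1 + 1, p.2) ∨ q = (p.1 - 1, p.2) ∨ q = (p.1, p.2 + 1) ∨ q = (p.1, p.2 - 1) := by
  unfold HAdj at h
  rcases p with ⟨p1, p2⟩; rcases q with ⟨q1, q2⟩
  simp only [Prod.mk.injEq] at *
  omega

/-- Parity weight of one edge relative to the downward ray at `v` (shifted right by 1/2):
the edge is horizontal, lies strictly below `v`, and spans `[v.1, v.1+1]`. -/
def g (v p q : ℤ × ℤ) : ZMod 2 :=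
  if p.2 = q.2 ∧ p.2 < v.2 ∧ ((p.1 = v.1 ∧ q.1 = v.1 + 1) ∨ (p.1 = v.1 + 1 ∧ q.1 = v.1))
  then 1 else 0

/-- Crossing count (mod 2) of a walk with the ray at `v`. -/
def fB (v : ℤ × ℤ) : List (ℤ × ℤ) → ZMod 2
  | [] => 0
  | [_] => 0
  | p :: q :: l => g v p q + fB v (q :: l)

/-- Indicator of the vertical ray `L v = {(v.1+1, d) : d < v.2}`. -/
def bL (v p : ℤ × ℤ) : ZMod 2 := if p.1 = v.1 + 1 ∧ p.2 < v.2 then 1 else 0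

lemma zmod2_add_self : ∀ x : ZMod 2, x + x = 0 := by decide

lemma zmod2_eq_of_add_eq_zero : ∀ x y : ZMod 2, x + y = 0 → x = y := by decide

lemma getLast?_cons_ne_nil {α : Type*} (a : α) {l : List α} (h : l ≠ []) :
    (a :: l).getLast? = l.getLast? := by
  cases l with
  | nil => exact absurd rfl h
  | cons b l' => exact List.getLast?_cons_cons


/-- Per-edge identity for a horizontal move of the base point. -/
lemma edgeH {v p q : ℤ × ℤ} (h : HAdj p q) (hp : p ≠ (v.1 + 1, v.2)) (hq : q ≠ (v.1 + 1, v.2)) :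
    g v p q + g (v.1 + 1, v.2) p q = bL v p + bL v q := by
  unfold HAdj at h
  rcases v with ⟨x, y⟩; rcases p with ⟨p1, p2⟩; rcases q with ⟨q1, q2⟩
  simp only [ne_eq, Prod.mk.injEq, not_and] at hp hq
  dsimp only at h
  simp only [g, bL]
  split_ifs <;> first | rfl | (exfalso; omega) | decide

/-- Per-edge identity for a vertical move of the base point. -/
lemma edgeV {v p q : ℤ × ℤ} (hp : p ≠ v) (hq : q ≠ v) :
    g v p q = g (v.1, v.2 + 1) p q := by
  rcases v with ⟨x, y⟩; rcases p with ⟨p1, p2⟩; rcases q with ⟨q1, q2⟩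
  simp only [ne_eq, Prod.mk.injEq, not_and] at hp hq
  simp only [g]
  split_ifs <;> first | rfl | (exfalso; omega)

lemma fB_keyH (v : ℤ × ℤ) :
    ∀ (l : List (ℤ × ℤ)) (w : ℤ × ℤ), List.Chain' HAdj (w :: l) →
      (v.1 + 1, v.2) ∉ (w :: l) →
      fB v (w :: l) + fB (v.1 + 1, v.2) (w :: l)
        = bL v w + bL v ((w :: l).getLast (List.cons_ne_nil _ _)) := by
  intro l
  induction l with
  | nil =>
    intro w _ _
    simp [fB, zmod2_add_self]
  | cons w' l' ih =>
    intro w hc hm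
    have hadj : HAdj w w' := (List.isChain_cons_cons.mp hc).1
    have hc' : List.Chain' HAdj (w' :: l') := (List.isChain_cons_cons.mp hc).2
    have hm' : (v.1 + 1, v.2) ∉ (w' :: l') := fun h => hm (List.mem_cons_of_mem _ h)
    have hpw : w ≠ (v.1 + 1, v.2) := fun h => hm (h ▸ List.mem_cons_self)
    have hpw' : w' ≠ (v.1 + 1, v.2) := fun h => hm' (h ▸ List.mem_cons_self)
    have hE := edgeH hadj hpw hpw'
    have hI := ih w' hc' hm'
    have hL : (w :: w' :: l').getLast (List.cons_ne_nil _ _)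
        = (w' :: l').getLast (List.cons_ne_nil _ _) := List.getLast_cons (List.cons_ne_nil _ _)
    show (g v w w' + fB v (w' :: l')) + (g (v.1+1, v.2) w w' + fB (v.1+1, v.2) (w' :: l')) = _
    rw [hL]
    calc (g v w w' + fB v (w' :: l')) + (g (v.1+1, v.2) w w' + fB (v.1+1, v.2) (w' :: l'))
        = (g v w w' + g (v.1+1, v.2) w w')
          + (fB v (w' :: l') + fB (v.1+1, v.2) (w' :: l')) := by ring
      _ = (bL v w + bL v w') + (bL v w' + bL v ((w' :: l').getLast (List.cons_ne_nil _ _))) := by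
          rw [hE, hI]
      _ = bL v w + bL v ((w' :: l').getLast (List.cons_ne_nil _ _))
          + (bL v w' + bL v w') := by ring
      _ = _ := by rw [zmod2_add_self, add_zero]

lemma fB_keyV (v : ℤ × ℤ) :
    ∀ (l : List (ℤ × ℤ)), v ∉ l → fB v l = fB (v.1, v.2 + 1) l := by
  intro l
  induction l with
  | nil => intro _; rfl
  | cons w l' ih =>
    intro hm
    cases l' with
    | nil => rfl
    | cons w' l'' =>
      have hw : w ≠ v := fun h => hm (h ▸ List.mem_cons_self)
      have hw' : w' ≠ v := fun h => hm (h ▸ List.mem_cons_of_mem _ (List.mem_cons_self))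
      show g v w w' + fB v (w' :: l'') = g (v.1, v.2+1) w w' + fB (v.1, v.2+1) (w' :: l'')
      rw [edgeV hw hw', ih (fun h => hm (List.mem_cons_of_mem _ h))]

lemma fB_zero_of (v : ℤ × ℤ) (hv : v.2 = 0) :
    ∀ (l : List (ℤ × ℤ)), (∀ p ∈ l, 0 ≤ p.2) → fB v l = 0 := by
  intro l
  induction l with
  | nil => intro _; rfl
  | cons w l' ih =>
    intro h
    cases l' with
    | nil => rfl
    | cons w' l'' =>
      show g v w w' + fB v (w' :: l'') = 0
      have h1 : 0 ≤ w.2 := h w (List.mem_cons_self)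
      have hg : g v w w' = 0 := by
        unfold g; rw [if_neg]; omega
      rw [hg, ih (fun p hp => h p (List.mem_cons_of_mem _ hp)), add_zero]

lemma fB_append (v : ℤ × ℤ) :
    ∀ (l1 l2 : List (ℤ × ℤ)) (z : ℤ × ℤ), l1.getLast? = some z →
      fB v (l1 ++ l2) = fB v l1 + fB v (z :: l2) := by
  intro l1
  induction l1 with
  | nil => intro l2 z h; simp at h
  | cons a l ih =>
    intro l2 z h
    cases l with
    | nil =>
      simp only [List.getLast?_singleton, Option.some.injEq] at h
      subst h
      show fB v (a :: l2) = fB v [a] + fB v (a :: l2)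
      simp [fB]
    | cons b l' =>
      have h' : (b :: l').getLast? = some z := by
        rwa [List.getLast?_cons_cons] at h
      show g v a b + fB v ((b :: l') ++ l2) = (g v a b + fB v (b :: l')) + fB v (z :: l2)
      rw [ih l2 z h']
      ring

lemma fB_cons₂ (v u w : ℤ × ℤ) (l : List (ℤ × ℤ)) (h : l.head? = some w) :
    fB v (u :: l) = g v u w + fB v l := by
  cases l with
  | nil => simp at h
  | cons a l' =>
    simp only [List.head?_cons, Option.some.injEq] at h
    subst h; rfl

/-- A horizontal segment at height `e`, going left from `c`, with `j+1` vertices. -/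
def hseg (e c : ℤ) : ℕ → List (ℤ × ℤ)
  | 0 => [(c, e)]
  | j + 1 => (c, e) :: hseg e (c - 1) j

/-- A horizontal segment at height 0 going right from `c`. -/
def rseg (c : ℤ) : ℕ → List (ℤ × ℤ)
  | 0 => [(c, 0)]
  | j + 1 => (c, 0) :: rseg (c + 1) j

lemma hseg_head? (e c : ℤ) (j : ℕ) : (hseg e c j).head? = some (c, e) := by
  cases j <;> rfl

lemma hseg_getLast? (e : ℤ) (j : ℕ) : ∀ c : ℤ, (hseg e c j).getLast? = some (c - j, e) := by
  induction j with
  | zero => intro c; simp [hseg]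
  | succ j ih =>
    intro c
    show ((c, e) :: hseg e (c - 1) j).getLast? = _
    have hne : hseg e (c - 1) j ≠ [] := by cases j <;> simp [hseg]
    rw [getLast?_cons_ne_nil _ hne, ih (c - 1)]
    congr 2
    push_cast
    ring

lemma hseg_chain' (e : ℤ) (j : ℕ) : ∀ c : ℤ, List.Chain' HAdj (hseg e c j) := by
  induction j with
  | zero => intro c; simp [hseg, List.Chain']
  | succ j ih =>
    intro c
    show List.Chain' HAdj ((c, e) :: hseg e (c - 1) j)
    rw [List.Chain', List.isChain_cons]
    refine ⟨?_, ih (c - 1)⟩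
    intro y hy
    rw [hseg_head? e (c-1) j] at hy
    simp only [Option.mem_def, Option.some.injEq] at hy
    subst hy
    unfold HAdj
    dsimp only
    omega

lemma hseg_mem (e : ℤ) (j : ℕ) : ∀ c : ℤ, ∀ p ∈ hseg e c j, p.2 = e := by
  induction j with
  | zero => intro c p hp; simp [hseg] at hp; subst hp; rfl
  | succ j ih =>
    intro c p hp
    rcases List.mem_cons.mp hp with h | h
    · subst h; rfl
    · exact ih (c - 1) p h

lemma rseg_head? (c : ℤ) (j : ℕ) : (rseg c j).head? = some (c, 0) := by
  cases j <;> rfl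

lemma rseg_getLast? (j : ℕ) : ∀ c : ℤ, (rseg c j).getLast? = some (c + j, 0) := by
  induction j with
  | zero => intro c; simp [rseg]
  | succ j ih =>
    intro c
    show ((c, 0) :: rseg (c + 1) j).getLast? = _
    have hne : rseg (c + 1) j ≠ [] := by cases j <;> simp [rseg]
    rw [getLast?_cons_ne_nil _ hne, ih (c + 1)]
    congr 2
    push_cast
    ring

lemma rseg_chain' (j : ℕ) : ∀ c : ℤ, List.Chain' HAdj (rseg c j) := by
  induction j with
  | zero => intro c; simp [rseg, List.Chain']
  | succ j ih =>
    intro c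
    show List.Chain' HAdj ((c, 0) :: rseg (c + 1) j)
    rw [List.Chain', List.isChain_cons]
    refine ⟨?_, ih (c + 1)⟩
    intro y hy
    rw [rseg_head? (c+1) j] at hy
    simp only [Option.mem_def, Option.some.injEq] at hy
    subst hy
    unfold HAdj
    dsimp only
    omega

lemma rseg_mem (j : ℕ) : ∀ c : ℤ, ∀ p ∈ rseg c j, p.2 = 0 := by
  induction j with
  | zero => intro c p hp; simp [rseg] at hp; subst hp; rfl
  | succ j ih =>
    intro c p hp
    rcases List.mem_cons.mp hp with h | h
    · subst h; rfl
    · exact ih (c + 1) p h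

/-- Crossing count of the bottom segment. -/
lemma fB_hseg (j : ℕ) : ∀ (c : ℤ) (v : ℤ × ℤ),
    fB v (hseg (-1) c j) = if c - j ≤ v.1 ∧ v.1 ≤ c - 1 ∧ -1 < v.2 then 1 else 0 := by
  induction j with
  | zero =>
    intro c v
    show (0 : ZMod 2) = _
    rw [if_neg]
    push_cast
    omega
  | succ j ih =>
    intro c v
    have hh : (hseg (-1) (c - 1) j).head? = some (c - 1, -1) := hseg_head? _ _ _
    have : fB v (hseg (-1) c (j+1)) = g v (c, -1) (c - 1, -1) + fB v (hseg (-1) (c-1) j) :=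
      fB_cons₂ v (c, -1) (c - 1, -1) _ hh
    rw [this, ih (c - 1) v]
    have hg : g v (c, -1) (c - 1, -1) = if v.1 = c - 1 ∧ -1 < v.2 then 1 else 0 := by
      unfold g
      split_ifs <;> first | rfl | (exfalso; omega) | omega
    rw [hg]
    push_cast
    split_ifs <;> first | rfl | (exfalso; omega) | decide

/-- Parity invariance: moving the base point along an edge, avoiding the closed walk `W`. -/
lemma fB_step (W : List (ℤ × ℤ)) (r : ℤ × ℤ) (hWne : W ≠ [])
    (hWc : List.Chain' HAdj W) (hh : W.head? = some r) (hl : W.getLast? = some r)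
    {v v2 : ℤ × ℤ} (hadj : HAdj v v2) (hv : v ∉ W) (hv2 : v2 ∉ W) :
    fB v W = fB v2 W := by
  obtain ⟨w, l, rfl⟩ : ∃ w l, W = w :: l := by
    cases W with
    | nil => exact absurd rfl hWne
    | cons w l => exact ⟨w, l, rfl⟩
  have hw : w = r := by simpa using hh
  have hlast : (w :: l).getLast (List.cons_ne_nil _ _) = r := by
    have := List.getLast?_eq_getLast (l := w :: l) (List.cons_ne_nil _ _)
    rw [this] at hl
    simpa using hl
  have keyH : ∀ u : ℤ × ℤ, (u.1 + 1, u.2) ∉ (w :: l) →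
      fB u (w :: l) = fB (u.1 + 1, u.2) (w :: l) := by
    intro u hu
    apply zmod2_eq_of_add_eq_zero
    rw [fB_keyH u l w hWc hu, hlast, hw]
    exact zmod2_add_self _
  rcases HAdj_cases hadj with h | h | h | h
  · exact h ▸ keyH v (h ▸ hv2)
  · have e : (v2.1 + 1, v2.2) = v := by
      rw [h]
      show (v.1 - 1 + 1, v.2) = v
      rw [show v.1 - 1 + 1 = v.1 by ring]
    have h2 := keyH v2 (by rw [e]; exact hv)
    rw [e] at h2
    exact h2.symm
  · exact h ▸ fB_keyV v _ hv
  · have e : (v2.1, v2.2 + 1) = v := by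
      rw [h]
      show (v.1, v.2 - 1 + 1) = v
      rw [show v.2 - 1 + 1 = v.2 by ring]
    have h2 := fB_keyV v2 _ hv2
    rw [e] at h2
    exact h2.symm

lemma fB_walk_inv (W : List (ℤ × ℤ)) (r : ℤ × ℤ) (hWne : W ≠ [])
    (hWc : List.Chain' HAdj W) (hh : W.head? = some r) (hl : W.getLast? = some r) :
    ∀ (Q : List (ℤ × ℤ)), List.Chain' HAdj Q → (∀ q ∈ Q, q ∉ W) →
      ∀ u v : ℤ × ℤ, Q.head? = some u → Q.getLast? = some v → fB u W = fB v W := by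
  intro Q
  induction Q with
  | nil => intro _ _ u v h1 _; simp at h1
  | cons q Q' ih =>
    intro hqc hm u v h1 h2
    have hu : q = u := by simpa using h1
    cases Q' with
    | nil =>
      have hv : q = v := by simpa using h2
      rw [← hu, ← hv]
    | cons q' Q'' =>
      have step : fB q W = fB q' W :=
        fB_step W r hWne hWc hh hl (List.isChain_cons_cons.mp hqc).1
          (hm q (List.mem_cons_self)) (hm q' (List.mem_cons_of_mem _ (List.mem_cons_self)))
      have h2' : (q' :: Q'').getLast? = some v := by
        rwa [List.getLast?_cons_cons] at h2
      have := ih (List.isChain_cons_cons.mp hqc).2 (fun p hp => hm p (List.mem_cons_of_mem _ hp))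
        q' v rfl h2'
      rw [← hu, step, this]

lemma head?_mem' {α : Type*} {l : List α} {a : α} (h : l.head? = some a) : a ∈ l := by
  cases l with
  | nil => simp at h
  | cons b l' =>
    simp only [List.head?_cons, Option.some.injEq] at h
    subst h
    exact List.mem_cons_self

/-- The crossing lemma: a half-plane path from `(-n-1,0)` to `(0,0)` and a half-plane
path from `(-n,0)` to `(m,0)` must share a vertex. -/
lemma crossing (P Q : List (ℤ × ℤ)) (n : ℕ) (hn : 1 ≤ n) (m : ℤ) (hm : 1 ≤ m)
    (hP1 : P.head? = some (-(n : ℤ) - 1, 0)) (hP2 : P.getLast? = some (0, 0))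
    (hPc : List.Chain' HAdj P) (hPh : InHalf P)
    (hQ1 : Q.head? = some (-(n : ℤ), 0)) (hQ2 : Q.getLast? = some (m, 0))
    (hQc : List.Chain' HAdj Q) (hQh : InHalf Q) :
    ∃ z, z ∈ P ∧ z ∈ Q := by
  by_contra hcon
  push_neg at hcon
  set a : ℤ := -(n : ℤ) - 1 with ha
  -- the bottom part of the closed walk
  set bot : List (ℤ × ℤ) := hseg (-1) 0 (n + 1) ++ [(a, 0)] with hbot
  set W : List (ℤ × ℤ) := P ++ bot with hW
  have hPne : P ≠ [] := by
    intro h; rw [h] at hP1; simp at hP1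
  have hsegne : hseg (-1) 0 (n+1) ≠ [] := by simp [hseg]
  have hbotne : bot ≠ [] := by simp [hbot]
  have hbothead : bot.head? = some (0, -1) := by
    rw [hbot]
    show ((0, -1) :: (hseg (-1) (0 - 1) n ++ [(a, 0)])).head? = _
    rfl
  have hsegLast : (hseg (-1) 0 (n+1)).getLast? = some (a, -1) := by
    rw [hseg_getLast?]
    congr 2
    push_cast [ha]
    ring
  -- the closed walk is a chain
  have hWc : List.Chain' HAdj W := by
    rw [hW, List.Chain', List.isChain_append]
    refine ⟨hPc, ?_, ?_⟩
    · rw [hbot, List.isChain_append]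
      refine ⟨hseg_chain' _ _ _, List.isChain_singleton _, ?_⟩
      intro x hx y hy
      rw [hsegLast] at hx
      simp only [Option.mem_def, Option.some.injEq] at hx hy
      subst hx
      simp only [List.head?_cons, Option.some.injEq] at hy
      subst hy
      unfold HAdj
      simp
    · intro x hx y hy
      rw [hP2] at hx
      rw [hbothead] at hy
      simp only [Option.mem_def, Option.some.injEq] at hx hy
      subst hx; subst hy
      unfold HAdj
      simp
  have hWh : W.head? = some (a, 0) := by
    cases P with
    | nil => exact absurd rfl hPne
    | cons p0 P' =>
      simp only [List.head?_cons, Option.some.injEq] at hP1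
      rw [hW]
      show (p0 :: (P' ++ bot)).head? = _
      rw [List.head?_cons, hP1]
  have hWl : W.getLast? = some (a, 0) := by
    rw [hW, List.getLast?_append_of_ne_nil _ hbotne, hbot,
      List.getLast?_append_of_ne_nil _ (by simp : ([(a, 0)] : List (ℤ × ℤ)) ≠ [])]
    rfl
  have hWne : W ≠ [] := by
    rw [hW]
    simp [hPne]
  -- Q avoids W
  have haP : (a, 0) ∈ P := head?_mem' hP1
  have hQW : ∀ q ∈ Q, q ∉ W := by
    intro q hq hqW
    rcases List.mem_append.mp hqW with h | h
    · exact hcon q h hq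
    · rcases List.mem_append.mp h with h' | h'
      · have := hseg_mem (-1) (n+1) 0 q h'
        have := hQh q hq
        omega
      · simp only [List.mem_singleton] at h'
        subst h'
        exact hcon _ haP hq
  -- parity invariance along Q
  have hinv : fB (-(n : ℤ), 0) W = fB (m, 0) W :=
    fB_walk_inv W (a, 0) hWne hWc hWh hWl Q hQc hQW _ _ hQ1 hQ2
  -- compute both sides
  have hcompute : ∀ v : ℤ × ℤ, v.2 = 0 →
      fB v W = if a ≤ v.1 ∧ v.1 ≤ -1 then 1 else 0 := by
    intro v hv
    rw [hW, fB_append v P bot (0, 0) hP2, fB_zero_of v hv P hPh, zero_add,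
      fB_cons₂ v (0, 0) (0, -1) bot hbothead, hbot,
      fB_append v (hseg (-1) 0 (n+1)) [(a, 0)] (a, -1) hsegLast, fB_hseg (n+1) 0 v]
    have hg1 : g v (0, 0) (0, -1) = 0 := by
      unfold g
      rw [if_neg]
      omega
    have hg2 : fB v [(a, -1), (a, 0)] = 0 := by
      show g v (a, -1) (a, 0) + 0 = 0
      unfold g
      rw [if_neg]
      · exact add_zero 0
      omega
    rw [hg1, hg2, zero_add, add_zero]
    have harith : (0 : ℤ) - ((n : ℤ) + 1) = a := by push_cast [ha]; ring
    push_cast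
    split_ifs <;> first | rfl | (exfalso; omega) | omega
  rw [hcompute _ rfl, hcompute _ rfl] at hinv
  rw [if_pos (by constructor <;> omega), if_neg (by omega)] at hinv
  exact one_ne_zero hinv

/-! ### Path splitting / joining and basic facts about `T` -/

lemma cost_nonneg (τ : (ℤ × ℤ) → (ℤ × ℤ) → ℝ) (hτ : ∀ p q, 0 ≤ τ p q) :
    ∀ Γ, 0 ≤ cost τ Γ := by
  intro Γ
  induction Γ with
  | nil => exact le_refl _
  | cons a l ih =>
    cases l with
    | nil => exact le_refl _
    | cons b l' =>
      show 0 ≤ τ a b + cost τ (b :: l')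
      exact add_nonneg (hτ a b) ih

lemma cost_cons₂ (τ : (ℤ × ℤ) → (ℤ × ℤ) → ℝ) (u w : ℤ × ℤ) (l : List (ℤ × ℤ))
    (h : l.head? = some w) : cost τ (u :: l) = τ u w + cost τ l := by
  cases l with
  | nil => simp at h
  | cons a l' =>
    simp only [List.head?_cons, Option.some.injEq] at h
    subst h; rfl

lemma cost_append (τ : (ℤ × ℤ) → (ℤ × ℤ) → ℝ) :
    ∀ (l1 l2 : List (ℤ × ℤ)) (z : ℤ × ℤ), l1.getLast? = some z →
      cost τ (l1 ++ l2) = cost τ l1 + cost τ (z :: l2) := by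
  intro l1
  induction l1 with
  | nil => intro l2 z h; simp at h
  | cons a l ih =>
    intro l2 z h
    cases l with
    | nil =>
      simp only [List.getLast?_singleton, Option.some.injEq] at h
      subst h
      show cost τ (a :: l2) = cost τ [a] + cost τ (a :: l2)
      show cost τ (a :: l2) = 0 + cost τ (a :: l2)
      rw [zero_add]
    | cons b l' =>
      have h' : (b :: l').getLast? = some z := by
        rwa [List.getLast?_cons_cons] at h
      show τ a b + cost τ ((b :: l') ++ l2) = (τ a b + cost τ (b :: l')) + cost τ (z :: l2)
      rw [ih l2 z h']
      ring

def Tset (τ : (ℤ × ℤ) → (ℤ × ℤ) → ℝ) (x y : ℤ × ℤ) : Set ℝ :=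
  {c | ∃ Γ : List (ℤ × ℤ), Γ.head? = some x ∧ Γ.getLast? = some y ∧
    Γ.Chain' HAdj ∧ InHalf Γ ∧ cost τ Γ = c}

lemma T_eq (τ : (ℤ × ℤ) → (ℤ × ℤ) → ℝ) (x y : ℤ × ℤ) : T τ x y = sInf (Tset τ x y) := rfl

lemma Tset_bdd (τ : (ℤ × ℤ) → (ℤ × ℤ) → ℝ) (hτ : ∀ p q, 0 ≤ τ p q) (x y : ℤ × ℤ) :
    BddBelow (Tset τ x y) := by
  refine ⟨0, ?_⟩
  rintro c ⟨Γ, -, -, -, -, rfl⟩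
  exact cost_nonneg τ hτ Γ

lemma Tset_nonempty (τ : (ℤ × ℤ) → (ℤ × ℤ) → ℝ) (x y : ℤ) :
    (Tset τ (x, 0) (y, 0)).Nonempty := by
  rcases le_or_gt x y with h | h
  · refine ⟨cost τ (rseg x (y - x).toNat), rseg x _, rseg_head? _ _, ?_, rseg_chain' _ _, ?_, rfl⟩
    · rw [rseg_getLast?]
      congr 2
      omega
    · intro p hp
      rw [rseg_mem _ _ p hp]
  · refine ⟨cost τ (hseg 0 x (x - y).toNat), hseg 0 x _, hseg_head? _ _ _, ?_,
      hseg_chain' _ _ _, ?_, rfl⟩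
    · rw [hseg_getLast?]
      congr 2
      omega
    · intro p hp
      rw [hseg_mem _ _ _ p hp]

/-- Splitting a path at a vertex it contains. -/
lemma path_split (τ : (ℤ × ℤ) → (ℤ × ℤ) → ℝ) :
    ∀ (Γ : List (ℤ × ℤ)) (z x y : ℤ × ℤ), z ∈ Γ → Γ.head? = some x → Γ.getLast? = some y →
      List.Chain' HAdj Γ → InHalf Γ →
      ∃ Γ₁ Γ₂ : List (ℤ × ℤ),
        Γ₁.head? = some x ∧ Γ₁.getLast? = some z ∧ Γ₂.head? = some z ∧ Γ₂.getLast? = some y ∧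
        List.Chain' HAdj Γ₁ ∧ List.Chain' HAdj Γ₂ ∧ InHalf Γ₁ ∧ InHalf Γ₂ ∧
        cost τ Γ = cost τ Γ₁ + cost τ Γ₂ := by
  intro Γ
  induction Γ with
  | nil => intro z x y hz; simp at hz
  | cons w l ih =>
    intro z x y hz h1 h2 hc hh
    have hwx : w = x := by simpa using h1
    by_cases hzw : z = w
    · refine ⟨[z], w :: l, by simp [hzw, hwx], by simp, by simp [hzw], h2, by simp [List.Chain'], hc, ?_, hh, ?_⟩
      · intro p hp
        simp only [List.mem_singleton] at hp
        subst hp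
        rw [hzw]
        exact hh w (List.mem_cons_self)
      · show cost τ (w :: l) = 0 + cost τ (w :: l)
        rw [zero_add]
    · have hzl : z ∈ l := by
        rcases List.mem_cons.mp hz with h | h
        · exact absurd h hzw
        · exact h
      cases l with
      | nil => simp at hzl
      | cons w' l' =>
        have h2' : (w' :: l').getLast? = some y := by
          rwa [List.getLast?_cons_cons] at h2
        have hc' : List.Chain' HAdj (w' :: l') := (List.isChain_cons_cons.mp hc).2
        have hh' : InHalf (w' :: l') := fun p hp => hh p (List.mem_cons_of_mem _ hp)
        obtain ⟨Γ₁, Γ₂, g1, g2, g3, g4, g5, g6, g7, g8, g9⟩ :=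
          ih z w' y hzl rfl h2' hc' hh'
        refine ⟨w :: Γ₁, Γ₂, ?_, ?_, g3, g4, ?_, g6, ?_, g8, ?_⟩
        · rw [List.head?_cons, hwx]
        · cases Γ₁ with
          | nil => simp at g1
          | cons u t =>
            rw [List.getLast?_cons_cons]
            exact g2
        · rw [List.Chain', List.isChain_cons]
          refine ⟨?_, g5⟩
          intro p hp
          rw [g1] at hp
          simp only [Option.mem_def, Option.some.injEq] at hp
          subst hp
          exact (List.isChain_cons_cons.mp hc).1
        · intro p hp
          rcases List.mem_cons.mp hp with h | h
          · rw [h]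
            exact hh w (List.mem_cons_self)
          · exact g7 p h
        · rw [cost_cons₂ τ w w' (w' :: l') rfl, cost_cons₂ τ w w' Γ₁ g1, g9]
          ring

/-- Joining two paths at a common endpoint gives an upper bound for `T`. -/
lemma T_le_join (τ : (ℤ × ℤ) → (ℤ × ℤ) → ℝ) (hτ : ∀ p q, 0 ≤ τ p q)
    (x z y : ℤ × ℤ) (Γ₁ Γ₂ : List (ℤ × ℤ))
    (h1 : Γ₁.head? = some x) (h2 : Γ₁.getLast? = some z)
    (h3 : Γ₂.head? = some z) (h4 : Γ₂.getLast? = some y)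
    (hc1 : List.Chain' HAdj Γ₁) (hc2 : List.Chain' HAdj Γ₂)
    (hh1 : InHalf Γ₁) (hh2 : InHalf Γ₂) :
    T τ x y ≤ cost τ Γ₁ + cost τ Γ₂ := by
  cases Γ₂ with
  | nil => simp at h3
  | cons z' l2 =>
    have hz : z' = z := by simpa using h3
    subst hz
    have hΓ1ne : Γ₁ ≠ [] := by intro h; rw [h] at h1; simp at h1
    have hcost : cost τ (Γ₁ ++ l2) = cost τ Γ₁ + cost τ (z' :: l2) := cost_append τ Γ₁ l2 z' h2
    apply le_trans (csInf_le (Tset_bdd τ hτ x y) _)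
    · exact le_of_eq hcost
    refine ⟨Γ₁ ++ l2, ?_, ?_, ?_, ?_, rfl⟩
    · cases Γ₁ with
      | nil => exact absurd rfl hΓ1ne
      | cons u t =>
        simp only [List.head?_cons, Option.some.injEq] at h1
        rw [List.cons_append, List.head?_cons, h1]
    · cases l2 with
      | nil =>
        have : z' = y := by simpa using h4
        rw [List.append_nil, h2, this]
      | cons b l2' =>
        rw [List.getLast?_append_of_ne_nil _ (by simp : (b :: l2') ≠ [])]
        rwa [List.getLast?_cons_cons] at h4
    · rw [List.Chain', List.isChain_append]
      refine ⟨hc1, hc2.tail, ?_⟩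
      intro p hp q hq
      rw [h2] at hp
      simp only [Option.mem_def, Option.some.injEq] at hp
      subst hp
      rw [List.Chain', List.isChain_cons] at hc2
      exact hc2.1 q hq
    · intro p hp
      rcases List.mem_append.mp hp with h | h
      · exact hh1 p h
      · exact hh2 p (List.mem_cons_of_mem _ h)

/-- The crossing inequality for passage times. -/
lemma cross_ineq (τ : (ℤ × ℤ) → (ℤ × ℤ) → ℝ) (hτ : ∀ p q, 0 ≤ τ p q)
    (n : ℕ) (hn : 1 ≤ n) (m : ℤ) (hm : 1 ≤ m) :
    T τ (-(n : ℤ), 0) (0, 0) + T τ (-(n : ℤ) - 1, 0) (m, 0) ≤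
      T τ (-(n : ℤ) - 1, 0) (0, 0) + T τ (-(n : ℤ), 0) (m, 0) := by
  set K : ℝ := T τ (-(n : ℤ), 0) (0, 0) + T τ (-(n : ℤ) - 1, 0) (m, 0) with hK
  have key : ∀ c1 ∈ Tset τ (-(n : ℤ) - 1, 0) (0, 0), ∀ c2 ∈ Tset τ (-(n : ℤ), 0) (m, 0),
      K ≤ c1 + c2 := by
    rintro c1 ⟨P, hP1, hP2, hPc, hPh, rfl⟩ c2 ⟨Q, hQ1, hQ2, hQc, hQh, rfl⟩
    obtain ⟨z, hzP, hzQ⟩ := crossing P Q n hn m hm hP1 hP2 hPc hPh hQ1 hQ2 hQc hQh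
    obtain ⟨P₁, P₂, p1, p2, p3, p4, p5, p6, p7, p8, p9⟩ :=
      path_split τ P z (-(n : ℤ) - 1, 0) (0, 0) hzP hP1 hP2 hPc hPh
    obtain ⟨Q₁, Q₂, q1, q2, q3, q4, q5, q6, q7, q8, q9⟩ :=
      path_split τ Q z (-(n : ℤ), 0) (m, 0) hzQ hQ1 hQ2 hQc hQh
    have hA : T τ (-(n : ℤ), 0) (0, 0) ≤ cost τ Q₁ + cost τ P₂ :=
      T_le_join τ hτ _ z _ Q₁ P₂ q1 q2 p3 p4 q5 p6 q7 p8
    have hB : T τ (-(n : ℤ) - 1, 0) (m, 0) ≤ cost τ P₁ + cost τ Q₂ :=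
      T_le_join τ hτ _ z _ P₁ Q₂ p1 p2 q3 q4 p5 q6 p7 q8
    rw [hK, p9, q9]
    linarith
  have hne1 := Tset_nonempty τ (-(n : ℤ) - 1) 0
  have hne2 := Tset_nonempty τ (-(n : ℤ)) m
  have step1 : ∀ c1 ∈ Tset τ (-(n : ℤ) - 1, 0) (0, 0), K - T τ (-(n : ℤ), 0) (m, 0) ≤ c1 := by
    intro c1 hc1
    have h' : K - c1 ≤ T τ (-(n : ℤ), 0) (m, 0) :=
      le_csInf hne2 (fun c2 hc2 => by linarith [key c1 hc1 c2 hc2])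
    linarith
  have final : K - T τ (-(n : ℤ), 0) (m, 0) ≤ T τ (-(n : ℤ) - 1, 0) (0, 0) :=
    le_csInf hne1 step1
  linarith

/-- For fixed `m ≥ 1`, the Busemann increments
`B_n(0,m) = T(−n,0) − T(−n,m)` are nondecreasing in `n`. -/
theorem busemann_increments_mono (τ : (ℤ × ℤ) → (ℤ × ℤ) → ℝ)
    (hτ : ∀ p q, 0 ≤ τ p q) (m : ℤ) (hm : 1 ≤ m) :
    ∀ n : ℕ, 1 ≤ n →
      T τ (-(n : ℤ), 0) (0, 0) - T τ (-(n : ℤ), 0) (m, 0) ≤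
        T τ (-((n : ℤ) + 1), 0) (0, 0) - T τ (-((n : ℤ) + 1), 0) (m, 0) := by
  intro n hn
  have h := cross_ineq τ hτ n hn m hm
  have he : -((n : ℤ) + 1) = -(n : ℤ) - 1 := by ring
  rw [he]
  linarith
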